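/- There exists a minmax bornology 𝓑 on ω such that 𝓑^♯ has cardinality 2^𝔠 (where 𝔠 is the cardinality of the continuum). -/

import Mathlib

open Set

def diagS (X : Type*) : Set (X × X) := {p | p.1 = p.2}

def compS {X : Type*} (E F : Set (X × X)) : Set (X × X) :=
  {p | ∃ z, (p.1, z) ∈ E ∧ (z, p.2) ∈ F}

def invS {X : Type*} (E : Set (X × X)) : Set (X × X) := {p | (p.2, p.1) ∈ E}

def ballS {X : Type*} (E : Set (X × X)) (A : Set X) : Set X :=
  {y | ∃ x ∈ A, (x, y) ∈ E}

/-- A coarse structure on `X`. -/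
structure IsCoarse {X : Type*} (E : Set (Set (X × X))) : Prop where
  diag_sub : ∀ e ∈ E, diagS X ⊆ e
  comp_mem : ∀ e ∈ E, ∀ f ∈ E, compS e f ∈ E
  inv_mem : ∀ e ∈ E, invS e ∈ E
  subset_mem : ∀ e ∈ E, ∀ f, diagS X ⊆ f → f ⊆ e → f ∈ E
  cover : ⋃₀ E = Set.univ

/-- `B` is bounded in the coarse structure `E`. -/
def IsBoundedIn {X : Type*} (E : Set (Set (X × X))) (B : Set X) : Prop :=
  ∃ e ∈ E, ∃ x : X, B ⊆ ballS e {x}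

/-- A bornology on `X` (as a family of sets). -/
structure IsBornology {X : Type*} (B : Set (Set X)) : Prop where
  cover : ⋃₀ B = Set.univ
  univ_not_mem : Set.univ ∉ B
  subset_mem : ∀ b ∈ B, ∀ a ⊆ b, a ∈ B
  union_mem : ∀ b ∈ B, ∀ c ∈ B, b ∪ c ∈ B

/-- The coarse structure `E` is compatible with the bornology `B`. -/
def Compatible {X : Type*} (E : Set (Set (X × X))) (B : Set (Set X)) : Prop :=
  ∀ b : Set X, b ∈ B ↔ IsBoundedIn E b

/-- The largest coarse structure compatible with `B`. -/
def upB {X : Type*} (B : Set (Set X)) : Set (Set (X × X)) :=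
  {e | diagS X ⊆ e ∧ ∀ b ∈ B, ballS e b ∈ B ∧ ballS (invS e) b ∈ B}

/-- The smallest coarse structure compatible with `B`. -/
def downB {X : Type*} (B : Set (Set X)) : Set (Set (X × X)) :=
  {e | diagS X ⊆ e ∧ ∃ b ∈ B, e ⊆ (b ×ˢ b) ∪ diagS X}

/-- `B^♯`: ultrafilters containing complements of all bounded sets. -/
def sharp {X : Type*} (B : Set (Set X)) : Set (Ultrafilter X) :=
  {p | ∀ b ∈ B, (bᶜ : Set X) ∈ p}

/-- Two ultrafilters are `B`-isomorphic. -/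
def BIso {X : Type*} (B : Set (Set X)) (p q : Ultrafilter X) : Prop :=
  ∃ f : X ≃ X, Ultrafilter.map f p = q ∧ (fun b : Set X => f '' b) '' B = B

/-- Two ultrafilters are isomorphic. -/
def UIso {X : Type*} (p q : Ultrafilter X) : Prop :=
  ∃ f : X ≃ X, Ultrafilter.map f p = q

/-- A free ultrafilter. -/
def FreeU {X : Type*} (p : Ultrafilter X) : Prop := ∀ x : X, p ≠ pure x

/-- The remainder `βω ∖ ω`: the set of free ultrafilters. -/
def remainder : Set (Ultrafilter ℕ) := {p | FreeU p}

/-- `L` is large in the coarse structure `E`. -/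
def IsLarge {X : Type*} (E : Set (Set (X × X))) (L : Set X) : Prop :=
  ∃ e ∈ E, ballS e L = Set.univ

/-- An unbounded coarse space is maximal if `X` is bounded in every
strictly larger coarse structure. -/
def IsMaximalCoarse {X : Type*} (E : Set (Set (X × X))) : Prop :=
  IsCoarse E ∧ ¬ IsBoundedIn E Set.univ ∧
    ∀ E' : Set (Set (X × X)), IsCoarse E' → E ⊂ E' → IsBoundedIn E' Set.univ

/-- The coarse structure on `ℕ` induced by finitely supported permutations. -/
def finPermCoarse : Set (Set (ℕ × ℕ)) :=
  {e | diagS ℕ ⊆ e ∧ ∃ F : Finset (Equiv.Perm ℕ),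
    (∀ g ∈ F, {x | g x ≠ x}.Finite) ∧
    e ⊆ {p | p.2 = p.1 ∨ ∃ g ∈ F, p.2 = g p.1}}


namespace MM

attribute [local instance] Classical.propDecidable

abbrev UF := Ultrafilter ℕ

def Free (u : UF) : Prop := ∀ a : ℕ, ({a}ᶜ : Set ℕ) ∈ u

lemma uf_ext {u v : UF} (h : ∀ A : Set ℕ, A ∈ u → A ∈ v) : u = v := by
  apply Ultrafilter.eq_of_le
  intro A hA
  by_contra hc
  have h2 : Aᶜ ∈ u := (Ultrafilter.compl_mem_iff_notMem).2 hc
  have := h _ h2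
  have h3 : A ∈ v := hA
  have h4 : (A ∩ Aᶜ : Set ℕ) ∈ v := Filter.inter_mem h3 this
  rw [Set.inter_compl_self] at h4
  exact Ultrafilter.empty_notMem h4

lemma mem_iff_inter_mem {u : UF} {Z : Set ℕ} (hZ : Z ∈ u) (A : Set ℕ) :
    A ∈ u ↔ A ∩ Z ∈ u := by
  constructor
  · intro h; exact Filter.inter_mem h hZ
  · intro h; exact Filter.mem_of_superset h inter_subset_left

lemma mem_congr_on {u : UF} {G X Y : Set ℕ} (hG : G ∈ u) (h : X ∩ G = Y ∩ G) :
    X ∈ u ↔ Y ∈ u := by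
  rw [mem_iff_inter_mem hG X, mem_iff_inter_mem hG Y, h]

lemma finite_compl_mem {u : UF} (hu : Free u) {A : Set ℕ} (hA : A.Finite) : Aᶜ ∈ u := by
  have : Aᶜ = ⋂ a ∈ A, ({a}ᶜ : Set ℕ) := by
    ext x; simp only [Set.mem_compl_iff, Set.mem_iInter, Set.mem_singleton_iff]
    exact Iff.intro (fun h i hi hx => h (hx ▸ hi)) (fun h hx => h x hx rfl)
  rw [this]
  exact (Filter.biInter_mem hA).2 (fun a _ => hu a)

lemma not_mem_of_finite {u : UF} (hu : Free u) {A : Set ℕ} (hA : A.Finite) : A ∉ u := by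
  intro h
  have h4 := Filter.inter_mem h (finite_compl_mem hu hA)
  rw [Set.inter_compl_self] at h4
  exact Ultrafilter.empty_notMem h4

lemma infinite_of_mem {u : UF} (hu : Free u) {A : Set ℕ} (h : A ∈ u) : A.Infinite := by
  exact fun hf => not_mem_of_finite hu hf h

lemma eq_pure_of_not_free {u : UF} (hu : ¬ Free u) : ∃ a : ℕ, u = pure a := by
  simp only [Free, not_forall] at hu
  obtain ⟨a, ha⟩ := hu
  have h1 : ({a} : Set ℕ) ∈ u := by
    rcases (Ultrafilter.mem_or_compl_mem u {a}) with h | h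
    · exact h
    · exact absurd h ha
  refine ⟨a, ?_⟩
  apply uf_ext
  intro A hA
  rw [Ultrafilter.mem_pure]
  by_contra hc
  have : ({a} : Set ℕ) ∩ A ∈ u := Filter.inter_mem h1 hA
  have he : ({a} : Set ℕ) ∩ A = ∅ := by
    ext x; simp; rintro rfl; exact hc
  rw [he] at this
  exact Ultrafilter.empty_notMem this

/-- Split a member of a free ultrafilter into a member and an infinite leftover. -/
lemma exists_split {u : UF} (hu : Free u) {Z : Set ℕ} (hZ : Z ∈ u) :
    ∃ Z₁, Z₁ ∈ u ∧ Z₁ ⊆ Z ∧ (Z \ Z₁).Infinite := by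
  have hZi : Z.Infinite := infinite_of_mem hu hZ
  set emb := hZi.natEmbedding with hemb
  set g : ℕ → ℕ := fun k => (emb k : ℕ) with hg
  have hginj : Function.Injective g := fun a b h => emb.injective (Subtype.ext h)
  have hgZ : ∀ k, g k ∈ Z := fun k => (emb k).2
  set Ev : Set ℕ := Set.range (fun k => g (2 * k)) with hEv
  set Od : Set ℕ := Set.range (fun k => g (2 * k + 1)) with hOd
  have hEvi : Ev.Infinite := Set.infinite_range_of_injective (by
    intro a b h; have := hginj h; omega)
  have hOdi : Od.Infinite := Set.infinite_range_of_injective (by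
    intro a b h; have := hginj h; omega)
  have hEvZ : Ev ⊆ Z := by rintro _ ⟨k, rfl⟩; exact hgZ _
  have hOdZ : Od ⊆ Z := by rintro _ ⟨k, rfl⟩; exact hgZ _
  have hdisj : Ev ∩ Od = ∅ := by
    ext m; simp only [hEv, hOd, Set.mem_inter_iff, Set.mem_range, Set.mem_empty_iff_false,
      iff_false, not_and]
    rintro ⟨a, rfl⟩ ⟨b, hb⟩
    have := hginj hb; omega
  -- one of Ev, Od is not in u
  have : Ev ∉ u ∨ Od ∉ u := by
    by_contra hc
    push_neg at hc
    have := Filter.inter_mem hc.1 hc.2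
    rw [hdisj] at this
    exact Ultrafilter.empty_notMem this
  rcases this with h | h
  · refine ⟨Z ∩ Evᶜ, ?_, inter_subset_left, ?_⟩
    · exact Filter.inter_mem hZ ((Ultrafilter.compl_mem_iff_notMem).2 h)
    · apply Set.Infinite.mono (s := Ev) ?_ hEvi
      intro m hm
      simp only [Set.mem_diff, Set.mem_inter_iff, Set.mem_compl_iff]
      exact ⟨hEvZ hm, fun hc => hc.2 hm⟩
  · refine ⟨Z ∩ Odᶜ, ?_, inter_subset_left, ?_⟩
    · exact Filter.inter_mem hZ ((Ultrafilter.compl_mem_iff_notMem).2 h)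
    · apply Set.Infinite.mono (s := Od) ?_ hOdi
      intro m hm
      simp only [Set.mem_diff, Set.mem_inter_iff, Set.mem_compl_iff]
      exact ⟨hOdZ hm, fun hc => hc.2 hm⟩


lemma uiso_refl (p : UF) : UIso p p := ⟨Equiv.refl ℕ, by
  apply uf_ext; intro A hA; rw [Ultrafilter.mem_map] at hA; simpa using hA⟩

lemma uiso_symm {p q : UF} (h : UIso p q) : UIso q p := by
  obtain ⟨f, hf⟩ := h
  refine ⟨f.symm, ?_⟩
  apply uf_ext
  intro A hA
  rw [Ultrafilter.mem_map] at hA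
  rw [← hf, Ultrafilter.mem_map] at hA
  have h5 : (⇑f ⁻¹' (⇑f.symm ⁻¹' A)) = A := by
    ext x; simp
  rwa [h5] at hA

/-- an equiv of ℕ between two infinite coinfinite-situation sets -/
lemma equiv_of_infinite_sets {S T : Set ℕ} (hS : S.Infinite) (hT : T.Infinite) :
    ∃ e : ℕ → ℕ, Set.BijOn e S T := by
  have h1 : Nonempty (Denumerable ↥S) := by
    have := hS.to_subtype
    exact nonempty_denumerable _
  have h2 : Nonempty (Denumerable ↥T) := by
    have := hT.to_subtype
    exact nonempty_denumerable _
  obtain ⟨d1⟩ := h1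
  obtain ⟨d2⟩ := h2
  set eS : ↥S ≃ ℕ := @Denumerable.eqv _ d1
  set eT : ↥T ≃ ℕ := @Denumerable.eqv _ d2
  classical
  refine ⟨fun n => if h : n ∈ S then (eT.symm (eS ⟨n, h⟩) : ℕ) else 0, ?_, ?_, ?_⟩
  · intro n hn
    simp only [dif_pos hn]
    exact (eT.symm (eS ⟨n, hn⟩)).2
  · intro a ha b hb hab
    simp only [dif_pos ha, dif_pos hb] at hab
    have := eS.injective (eT.symm.injective (Subtype.ext hab))
    exact congrArg Subtype.val this
  · intro t ht
    refine ⟨(eS.symm (eT ⟨t, ht⟩) : ℕ), (eS.symm (eT ⟨t, ht⟩)).2, ?_⟩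
    simp only [dif_pos (eS.symm (eT ⟨t, ht⟩)).2]
    rw [Subtype.coe_eta, Equiv.apply_symm_apply, Equiv.symm_apply_apply]

/-- Key: pushing forward along a map injective on a member yields an isomorphic ultrafilter. -/
lemma uiso_of_map {p q : UF} (hp : Free p) {x : ℕ → ℕ} {Z : Set ℕ}
    (hZ : Z ∈ p) (hinj : Set.InjOn x Z) (hmap : Ultrafilter.map x p = q) : UIso p q := by
  classical
  obtain ⟨Z₁, hZ₁u, hZ₁Z, hrem⟩ := exists_split hp hZ
  have hinj1 : Set.InjOn x Z₁ := hinj.mono hZ₁Z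
  have hC1 : (Z₁ᶜ : Set ℕ).Infinite := hrem.mono (fun m hm => hm.2)
  have hxrem : (x '' (Z \ Z₁)).Infinite := Set.Infinite.image (hinj.mono diff_subset) hrem
  have hC2 : ((x '' Z₁)ᶜ : Set ℕ).Infinite := by
    apply hxrem.mono
    rintro _ ⟨z, hz, rfl⟩
    intro hc
    obtain ⟨w, hw, hwz⟩ := hc
    have : w = z := hinj (hZ₁Z hw) hz.1 hwz
    exact hz.2 (this ▸ hw)
  obtain ⟨e, he⟩ := equiv_of_infinite_sets hC1 hC2
  set F : ℕ → ℕ := fun n => if n ∈ Z₁ then x n else e n with hF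
  have hFbij : Function.Bijective F := by
    constructor
    · intro a b hab
      by_cases ha : a ∈ Z₁ <;> by_cases hb : b ∈ Z₁
      · simp only [hF, if_pos ha, if_pos hb] at hab
        exact hinj1 ha hb hab
      · simp only [hF, if_pos ha, if_neg hb] at hab
        exfalso
        have h1 : x a ∈ x '' Z₁ := ⟨a, ha, rfl⟩
        have h2 : e b ∈ (x '' Z₁)ᶜ := he.1 hb
        exact h2 (hab ▸ h1)
      · simp only [hF, if_neg ha, if_pos hb] at hab
        exfalso
        have h1 : x b ∈ x '' Z₁ := ⟨b, hb, rfl⟩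
        have h2 : e a ∈ (x '' Z₁)ᶜ := he.1 ha
        exact h2 (hab ▸ h1)
      · simp only [hF, if_neg ha, if_neg hb] at hab
        exact he.2.1 ha hb hab
    · intro m
      by_cases hm : m ∈ x '' Z₁
      · obtain ⟨z, hz, rfl⟩ := hm
        exact ⟨z, by simp [hF, if_pos hz]⟩
      · obtain ⟨a, ha, hae⟩ := he.2.2 hm
        exact ⟨a, by simp [hF, if_neg ha, hae]⟩
  refine ⟨Equiv.ofBijective F hFbij, ?_⟩
  rw [← hmap]
  apply uf_ext
  intro A hA
  rw [Ultrafilter.mem_map] at hA ⊢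
  rw [mem_iff_inter_mem hZ₁u] at hA ⊢
  have hee : ((Equiv.ofBijective F hFbij) ⁻¹' A) ∩ Z₁ = (x ⁻¹' A) ∩ Z₁ := by
    ext n
    simp only [Set.mem_inter_iff, Set.mem_preimage, Equiv.ofBijective_apply, hF]
    constructor
    · rintro ⟨h1, h2⟩; rw [if_pos h2] at h1; exact ⟨h1, h2⟩
    · rintro ⟨h1, h2⟩; rw [if_pos h2]; exact ⟨h1, h2⟩
  rwa [hee] at hA


def pick (a b : Fin 3) : Fin 3 :=
  if 0 ≠ a ∧ 0 ≠ b then 0 else if 1 ≠ a ∧ 1 ≠ b then 1 else 2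

lemma pick_ne : ∀ a b : Fin 3, pick a b ≠ a ∧ pick a b ≠ b := by decide

/-- Greedy 3-coloring of the functional graph of `x` (restricted to `W`). -/
noncomputable def col (x : ℕ → ℕ) (W : Set ℕ) : ℕ → Fin 3 :=
  (Nat.lt_wfRel.wf).fix (fun n ih =>
    pick (if h : n ∈ W ∧ x n < n then ih (x n) h.2 else 0)
      (if h : ∃ m, m < n ∧ m ∈ W ∧ x m = n then ih h.choose h.choose_spec.1 else 0))

lemma col_eq (x : ℕ → ℕ) (W : Set ℕ) (n : ℕ) : col x W n =
    pick (if h : n ∈ W ∧ x n < n then col x W (x n) else 0)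
      (if h : ∃ m, m < n ∧ m ∈ W ∧ x m = n then col x W h.choose else 0) := by
  unfold col
  rw [WellFounded.fix_eq]

lemma col_prop {x : ℕ → ℕ} {W : Set ℕ} (hinj : Set.InjOn x W) :
    ∀ z ∈ W, z ≠ x z → col x W z ≠ col x W (x z) := by
  intro z hz hne
  rcases Nat.lt_or_ge (x z) z with h | h
  · rw [col_eq x W z]
    have ha : z ∈ W ∧ x z < z := ⟨hz, h⟩
    rw [dif_pos ha]
    exact (pick_ne _ _).1
  · have hlt : z < x z := lt_of_le_of_ne h hne
    intro hc
    have hex : ∃ m, m < x z ∧ m ∈ W ∧ x m = x z := ⟨z, hlt, hz, rfl⟩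
    have hcs := hex.choose_spec
    have hch : hex.choose = z := hinj hcs.2.1 hz hcs.2.2
    have h2 := col_eq x W (x z)
    rw [dif_pos hex, hch] at h2
    rw [h2] at hc
    exact (pick_ne _ _).2 hc.symm

/-- From the greedy coloring: a member of an ultrafilter on which `x` is image-disjoint. -/
lemma exists_disjoint_piece (u : Ultrafilter ℕ) {x : ℕ → ℕ} {W : Set ℕ}
    (hW : W ∈ u) (hinj : Set.InjOn x W) (hfpf : ∀ z ∈ W, x z ≠ z) :
    ∃ Z, Z ∈ u ∧ Z ⊆ W ∧ (x '' Z) ∩ Z = ∅ := by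
  set C : Fin 3 → Set ℕ := fun i => W ∩ {z | col x W z = i} with hC
  have h3 : ∀ i : Fin 3, i = 0 ∨ i = 1 ∨ i = 2 := by decide
  have hcover : W ⊆ C 0 ∪ C 1 ∪ C 2 := by
    intro z hz
    rcases h3 (col x W z) with h | h | h
    · exact Or.inl (Or.inl ⟨hz, h⟩)
    · exact Or.inl (Or.inr ⟨hz, h⟩)
    · exact Or.inr ⟨hz, h⟩
  have hmem : C 0 ∪ C 1 ∪ C 2 ∈ u := Filter.mem_of_superset hW hcover
  have : C 0 ∈ u ∨ C 1 ∈ u ∨ C 2 ∈ u := by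
    rcases (Ultrafilter.union_mem_iff).1 hmem with h | h
    · rcases (Ultrafilter.union_mem_iff).1 h with h' | h'
      · exact Or.inl h'
      · exact Or.inr (Or.inl h')
    · exact Or.inr (Or.inr h)
  have key : ∀ i : Fin 3, C i ∈ u → ∃ Z, Z ∈ u ∧ Z ⊆ W ∧ (x '' Z) ∩ Z = ∅ := by
    intro i hi
    refine ⟨C i, hi, inter_subset_left, ?_⟩
    ext w
    simp only [Set.mem_inter_iff, Set.mem_image, Set.mem_empty_iff_false, iff_false, not_and]
    rintro ⟨z, hzC, rfl⟩ hxC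
    have hzW : z ∈ W := hzC.1
    have hne : z ≠ x z := fun hh => (hfpf z hzW) hh.symm
    have := col_prop hinj z hzW hne
    rw [hzC.2, hxC.2] at this
    exact this rfl
  rcases this with h | h | h
  · exact key 0 h
  · exact key 1 h
  · exact key 2 h


/-- The pullback ultrafilter along `x` (injective on `Z`), given `x '' Z ∈ u`. -/
noncomputable def pullb (x : ℕ → ℕ) (Z : Set ℕ) (u : UF) (hinj : Set.InjOn x Z)
    (hZ : x '' Z ∈ u) : UF := by
  refine Ultrafilter.ofComplNotMemIff
    (Filter.mk {A : Set ℕ | x '' (A ∩ Z) ∈ u} ?_ ?_ ?_) ?_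
  · simp only [Set.mem_setOf_eq, Set.univ_inter]; exact hZ
  · intro A B hA hAB
    exact Filter.mem_of_superset hA (Set.image_mono (Set.inter_subset_inter_left _ hAB))
  · intro A B hA hB
    show x '' ((A ∩ B) ∩ Z) ∈ u
    have h1 : x '' ((A ∩ B) ∩ Z) = x '' (A ∩ Z) ∩ x '' (B ∩ Z) := by
      rw [← hinj.image_inter inter_subset_right inter_subset_right,
        Set.inter_inter_distrib_right]
    rw [h1]
    exact Filter.inter_mem hA hB
  · intro A
    show ¬ (x '' (Aᶜ ∩ Z) ∈ u) ↔ x '' (A ∩ Z) ∈ u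
    constructor
    · intro h
      have hsplit : x '' Z = x '' (A ∩ Z) ∪ x '' (Aᶜ ∩ Z) := by
        rw [← Set.image_union, ← Set.union_inter_distrib_right, Set.union_compl_self,
          Set.univ_inter]
      have := hsplit ▸ hZ
      rcases (Ultrafilter.union_mem_iff).1 this with h' | h'
      · exact h'
      · exact absurd h' h
    · intro h hc
      have hdisj : x '' (A ∩ Z) ∩ x '' (Aᶜ ∩ Z) = ∅ := by
        rw [← hinj.image_inter inter_subset_right inter_subset_right]
        have : (A ∩ Z) ∩ (Aᶜ ∩ Z) = ∅ := by
          ext m; simp only [Set.mem_inter_iff, Set.mem_compl_iff, Set.mem_empty_iff_false,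
            iff_false, not_and]
          tauto
        rw [this, Set.image_empty]
      have := Filter.inter_mem h hc
      rw [hdisj] at this
      exact Ultrafilter.empty_notMem this

lemma mem_pullb {x : ℕ → ℕ} {Z : Set ℕ} {u : UF} (hinj : Set.InjOn x Z)
    (hZ : x '' Z ∈ u) (A : Set ℕ) : A ∈ pullb x Z u hinj hZ ↔ x '' (A ∩ Z) ∈ u := Iff.rfl

/-- The sum (limit) ultrafilter. -/
noncomputable def sumU (q : UF) (p : ℕ → UF) : UF := by
  refine Ultrafilter.ofComplNotMemIff
    (Filter.mk {A : Set ℕ | {n | A ∈ p n} ∈ q} ?_ ?_ ?_) ?_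
  · simp only [Set.mem_setOf_eq]
    have : {n | (Set.univ : Set ℕ) ∈ p n} = Set.univ := by
      ext n; simp only [Set.mem_setOf_eq, Set.mem_univ, iff_true]; exact Filter.univ_mem
    rw [this]; exact Filter.univ_mem
  · intro A B hA hAB
    exact Filter.mem_of_superset hA (fun n hn => Filter.mem_of_superset hn hAB)
  · intro A B hA hB
    show {n | A ∩ B ∈ p n} ∈ q
    have : {n | A ∩ B ∈ p n} = {n | A ∈ p n} ∩ {n | B ∈ p n} := by
      ext n
      simp only [Set.mem_setOf_eq, Set.mem_inter_iff]
      constructor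
      · intro h; exact ⟨Filter.mem_of_superset h inter_subset_left,
          Filter.mem_of_superset h inter_subset_right⟩
      · intro h; exact Filter.inter_mem h.1 h.2
    rw [this]; exact Filter.inter_mem hA hB
  · intro A
    show ¬ ({n | Aᶜ ∈ p n} ∈ q) ↔ {n | A ∈ p n} ∈ q
    have h1 : {n | Aᶜ ∈ p n} = {n | A ∈ p n}ᶜ := by
      ext n; simp [Ultrafilter.compl_mem_iff_notMem]
    rw [h1, Ultrafilter.compl_mem_iff_notMem]
    exact not_not

lemma mem_sumU {q : UF} {p : ℕ → UF} (A : Set ℕ) : A ∈ sumU q p ↔ {n | A ∈ p n} ∈ q := Iff.rfl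

/-- Representation of `p` as a sum of the system `c` over blocks `bl`. -/
def IsSystem (p : UF) (bl : ℕ → Set ℕ) (s : UF) (c : ℕ → UF) : Prop :=
  Free s ∧ ({n | bl n ∈ c n} ∈ s) ∧ ∀ A : Set ℕ, A ∈ p ↔ {n | A ∈ c n} ∈ s

def PDisj (bl : ℕ → Set ℕ) : Prop := ∀ m n, m ≠ n → bl m ∩ bl n = ∅

lemma index_canonical {p : UF} {bl : ℕ → Set ℕ} {s : UF} {c : ℕ → UF}
    (hd : PDisj bl) (h : IsSystem p bl s c) (N : Set ℕ) :
    N ∈ s ↔ (⋃ n ∈ N, bl n) ∈ p := by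
  obtain ⟨hfree, hblm, hiff⟩ := h
  rw [hiff]
  set A := ⋃ n ∈ N, bl n with hA
  have hagree : {n | A ∈ c n} ∩ {n | bl n ∈ c n} = N ∩ {n | bl n ∈ c n} := by
    ext n
    simp only [Set.mem_inter_iff, Set.mem_setOf_eq]
    constructor
    · rintro ⟨h1, h2⟩
      refine ⟨?_, h2⟩
      by_contra hnN
      have hABd : A ∩ bl n = ∅ := by
        rw [hA]
        ext m
        simp only [Set.mem_inter_iff, Set.mem_iUnion, Set.mem_empty_iff_false, iff_false, not_and]
        rintro ⟨k, hk, hmk⟩ hmn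
        have : k ≠ n := fun hh => hnN (hh ▸ hk)
        have := hd k n this
        exact absurd (Set.mem_inter hmk hmn) (by rw [this]; exact id)
      have := Filter.inter_mem h1 h2
      rw [hABd] at this
      exact Ultrafilter.empty_notMem this
    · rintro ⟨h1, h2⟩
      refine ⟨?_, h2⟩
      exact Filter.mem_of_superset h2 (by
        intro m hm
        rw [hA]
        exact Set.mem_biUnion h1 hm)
  exact (mem_congr_on hblm hagree).symm

lemma system_unique {p : UF} {bl : ℕ → Set ℕ} {s s' : UF} {c c' : ℕ → UF}
    (hd : PDisj bl) (h1 : IsSystem p bl s c) (h2 : IsSystem p bl s' c') :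
    s = s' ∧ {n | c n = c' n} ∈ s := by
  have hss : s = s' := by
    apply uf_ext
    intro N hN
    rw [index_canonical hd h2]
    exact (index_canonical hd h1 N).1 hN
  subst hss
  constructor
  · rfl
  · by_contra hbad
    have hNbad : {n | c n = c' n}ᶜ ∈ s := (Ultrafilter.compl_mem_iff_notMem).2 hbad
    classical
    -- choose witnesses V n ∈ c n \ c' n for bad n (in the good sets)
    set Good : Set ℕ := {n | bl n ∈ c n} ∩ {n | bl n ∈ c' n} ∩ {n | c n = c' n}ᶜ with hGood
    have hGoodm : Good ∈ s := Filter.inter_mem (Filter.inter_mem h1.2.1 h2.2.1) hNbad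
    have hV : ∀ n ∈ Good, ∃ V : Set ℕ, V ∈ c n ∧ V ∉ c' n := by
      intro n hn
      have hne : c n ≠ c' n := hn.2
      by_contra hc
      push_neg at hc
      exact hne (uf_ext hc)
    set V : ℕ → Set ℕ := fun n => if h : n ∈ Good then (hV n h).choose else ∅ with hVdef
    set U : Set ℕ := ⋃ n ∈ Good, (V n ∩ bl n) with hU
    have hVspec : ∀ n, n ∈ Good → V n ∈ c n ∧ V n ∉ c' n := by
      intro n hn
      have hVn : V n = (hV n hn).choose := by rw [hVdef]; exact dif_pos hn
      rw [hVn]; exact (hV n hn).choose_spec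
    have hUc : ∀ n ∈ Good, U ∈ c n := by
      intro n hn
      apply Filter.mem_of_superset (Filter.inter_mem ((hVspec n hn).1) hn.1.1)
      rw [hU]
      exact Set.subset_biUnion_of_mem (u := fun n => V n ∩ bl n) hn
    have hUp : U ∈ p := by
      rw [h1.2.2]
      exact Filter.mem_of_superset hGoodm (fun n hn => hUc n hn)
    have hUnc' : ∀ n ∈ Good, U ∉ c' n := by
      intro n hn hc
      have hUbl : U ∩ bl n = V n ∩ bl n := by
        rw [hU]
        ext m
        simp only [Set.mem_inter_iff, Set.mem_iUnion]
        constructor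
        · rintro ⟨⟨k, hk, hmk⟩, hmn⟩
          by_cases hkn : k = n
          · subst hkn; exact ⟨hmk.1, hmn⟩
          · exfalso
            have := hd k n hkn
            exact absurd (Set.mem_inter hmk.2 hmn) (by rw [this]; exact id)
        · rintro ⟨hmV, hmn⟩
          exact ⟨⟨n, hn, hmV, hmn⟩, hmn⟩
      have h5 : U ∩ bl n ∈ c' n := Filter.inter_mem hc hn.1.2
      rw [hUbl] at h5
      have h6 : V n ∈ c' n := Filter.mem_of_superset h5 inter_subset_left
      exact (hVspec n hn).2 h6
    have hUnp : U ∉ p := by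
      rw [h2.2.2]
      intro hc
      have := Filter.inter_mem hc hGoodm
      have hemp : {n | U ∈ c' n} ∩ Good = ∅ := by
        ext n
        simp only [Set.mem_inter_iff, Set.mem_setOf_eq, Set.mem_empty_iff_false, iff_false,
          not_and]
        intro hUn hn
        exact hUnc' n hn hUn
      rw [hemp] at this
      exact Ultrafilter.empty_notMem this
    exact hUnp hUp

/-- Choice of a system for `(p, bl)` (if one exists). -/
noncomputable def chosenSC (p : UF) (bl : ℕ → Set ℕ) : UF × (ℕ → UF) := by
  classical
  exact if h : ∃ sc : UF × (ℕ → UF), IsSystem p bl sc.1 sc.2 then h.choose else (p, fun _ => p)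

lemma chosenSC_spec {p : UF} {bl : ℕ → Set ℕ}
    (h : ∃ sc : UF × (ℕ → UF), IsSystem p bl sc.1 sc.2) :
    IsSystem p bl (chosenSC p bl).1 (chosenSC p bl).2 := by
  classical
  rw [chosenSC, dif_pos h]
  exact h.choose_spec


/-- The ground type for the independent family. -/
abbrev Sig := Finset ℕ × Finset (Finset ℕ)

noncomputable instance : Denumerable Sig := by
  have : Infinite Sig := by
    apply Infinite.of_injective (fun n => ((({n} : Finset ℕ), (∅ : Finset (Finset ℕ))) : Sig))
    intro a b h
    have := congrArg Prod.fst h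
    simpa using this
  exact (nonempty_denumerable Sig).some

noncomputable def sigE : Sig ≃ ℕ := Denumerable.eqv Sig

/-- The independent family on ℕ, indexed by sets of naturals. -/
noncomputable def IFam (W : Set ℕ) : Set ℕ :=
  {m | ((sigE.symm m).1.filter (fun a => a ∈ W)) ∈ (sigE.symm m).2}

/-- Key independence property. -/
lemma IFam_indep (T : Finset (Set ℕ)) (f : Set ℕ → Bool) :
    {m | ∀ W ∈ T, (m ∈ IFam W ↔ f W = true)}.Infinite := by
  -- separating finite set
  have hsep : ∀ V W : Set ℕ, V ≠ W → ∃ a : ℕ, (a ∈ V ↔ a ∉ W) := by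
    intro V W h
    by_contra hc
    push_neg at hc
    apply h
    ext a
    have := hc a
    tauto
  set sep : Set ℕ × Set ℕ → ℕ := fun q => if h : q.1 ≠ q.2 then (hsep q.1 q.2 h).choose else 0
    with hsepdef
  set F0 : Finset ℕ := (T ×ˢ T).image sep with hF0
  -- for every finite set F ⊇ F0 we get a suitable m
  have key : ∀ F : Finset ℕ, F0 ⊆ F →
      (sigE (F, (T.filter (fun W => f W = true)).image (fun W => F.filter (fun a => a ∈ W))))
        ∈ {m | ∀ W ∈ T, (m ∈ IFam W ↔ f W = true)} := by
    intro F hF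
    simp only [Set.mem_setOf_eq]
    intro W hW
    have hsymm : sigE.symm (sigE (F, _)) = (F, (T.filter (fun W => f W = true)).image
        (fun W => F.filter (fun a => a ∈ W))) := Equiv.symm_apply_apply _ _
    constructor
    · intro hm
      simp only [IFam, Set.mem_setOf_eq, hsymm] at hm
      obtain ⟨W', hW', hWW'⟩ := Finset.mem_image.1 hm
      have hW'T : W' ∈ T := (Finset.mem_filter.1 hW').1
      have hW'f : f W' = true := (Finset.mem_filter.1 hW').2
      -- W and W' have equal traces on F, hence W = W'
      by_cases hWeq : W = W'
      · rw [hWeq]; exact hW'f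
      · exfalso
        have hne : W ≠ W' := hWeq
        have ha := (hsep W W' hne).choose_spec
        set a := (hsep W W' hne).choose
        have haF : a ∈ F := by
          apply hF
          rw [hF0]
          apply Finset.mem_image.2
          refine ⟨(W, W'), Finset.mem_product.2 ⟨hW, hW'T⟩, ?_⟩
          rw [hsepdef]
          simp only [ne_eq]
          rw [dif_pos hne]
        have : (a ∈ F.filter (fun b => b ∈ W)) ↔ (a ∈ F.filter (fun b => b ∈ W')) := by
          rw [hWW']
        simp only [Finset.mem_filter, haF, true_and] at this
        tauto
    · intro hf
      simp only [IFam, Set.mem_setOf_eq, hsymm]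
      apply Finset.mem_image.2
      exact ⟨W, Finset.mem_filter.2 ⟨hW, hf⟩, rfl⟩
  -- infinitude: map each n beyond max to a fresh F
  apply Set.infinite_of_injective_forall_mem
    (f := fun n : ℕ => (sigE (insert (n + (F0.sup id) + 1) F0,
      ((T.filter (fun W => f W = true)).image
        (fun W => (insert (n + (F0.sup id) + 1) F0).filter (fun a => a ∈ W))))))
  · intro a b hab
    have := sigE.injective hab
    have h1 := congrArg Prod.fst this
    simp only at h1
    have ha : a + (F0.sup id) + 1 ∈ insert (b + (F0.sup id) + 1) F0 := by
      rw [← h1]; exact Finset.mem_insert_self _ _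
    rcases Finset.mem_insert.1 ha with h | h
    · omega
    · exfalso
      have := Finset.le_sup (f := id) h
      simp only [id] at this
      omega
  · intro n
    apply key
    exact Finset.subset_insert _ _

def genSet (f : Set ℕ → Bool) : Set (Set ℕ) :=
  {A : Set ℕ | ∃ W, (f W = true ∧ A = IFam W) ∨ (f W = false ∧ A = (IFam W)ᶜ)} ∪
    {A : Set ℕ | Aᶜ.Finite}

lemma genSet_neBot (f : Set ℕ → Bool) : Filter.NeBot (Filter.generate (genSet f)) := by
    rw [Filter.neBot_iff]
    intro hbot
    have hempty : (∅ : Set ℕ) ∈ Filter.generate (genSet f) := by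
      rw [hbot]; exact Filter.mem_bot
    rw [Filter.mem_generate_iff] at hempty
    obtain ⟨t, htsub, htfin, htint⟩ := hempty
    rw [genSet] at htsub
    classical
    set t1 := {A ∈ t | ∃ W, (f W = true ∧ A = IFam W) ∨ (f W = false ∧ A = (IFam W)ᶜ)} with ht1
    set t2 := t \ t1 with ht2
    have ht2co : ∀ A ∈ t2, Aᶜ.Finite := by
      intro A hA
      rcases htsub hA.1 with h | h
      · exact absurd ⟨hA.1, h⟩ hA.2
      · exact h
    -- choose W for each A ∈ t1
    have hWc : ∀ A ∈ t1, ∃ W, (f W = true ∧ A = IFam W) ∨ (f W = false ∧ A = (IFam W)ᶜ) :=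
      fun A hA => hA.2
    set Wf : Set ℕ → Set ℕ := fun A => if h : A ∈ t1 then (hWc A h).choose else ∅ with hWf
    have ht1fin : t1.Finite := htfin.subset (fun A hA => hA.1)
    set T : Finset (Set ℕ) := ht1fin.toFinset.image Wf with hT
    have hbig := IFam_indep T f
    -- the combo set is a.e. inside ⋂₀ t
    have hsub : {m | ∀ W ∈ T, (m ∈ IFam W ↔ f W = true)} ∩ (⋂ A ∈ t2, A) ⊆ ⋂₀ t := by
      intro m hm
      rintro A hA
      by_cases h1 : A ∈ t1
      · have hspec := (hWc A h1).choose_spec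
        have hWT : Wf A ∈ T := by
          rw [hT]
          apply Finset.mem_image.2
          exact ⟨A, ht1fin.mem_toFinset.2 h1, rfl⟩
        have hWfA : Wf A = (hWc A h1).choose := by rw [hWf]; exact dif_pos h1
        have hiff := hm.1 (Wf A) hWT
        rcases hspec with ⟨hft, hAe⟩ | ⟨hff, hAe⟩
        · rw [hAe]
          rw [hWfA] at hiff
          exact hiff.2 hft
        · rw [hAe]
          rw [hWfA] at hiff
          intro hc
          have := hiff.1 hc
          rw [hff] at this
          exact Bool.false_ne_true this
      · have hA2 : A ∈ t2 := ⟨hA, h1⟩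
        exact Set.mem_iInter₂.1 hm.2 A hA2
    -- but the LHS is infinite (hence nonempty), contradiction with ⊆ ∅
    have ht2fin : t2.Finite := htfin.subset (fun A hA => hA.1)
    have hco : (⋂ A ∈ t2, A).Infinite → True := fun _ => trivial
    have hinf : ({m | ∀ W ∈ T, (m ∈ IFam W ↔ f W = true)} ∩ (⋂ A ∈ t2, A)).Nonempty := by
      have hcompl : (⋂ A ∈ t2, A)ᶜ.Finite := by
        have : (⋂ A ∈ t2, A)ᶜ = ⋃ A ∈ t2, Aᶜ := by
          simp [Set.compl_iInter]
        rw [this]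
        exact Set.Finite.biUnion ht2fin (fun A hA => ht2co A hA)
      have : ({m | ∀ W ∈ T, (m ∈ IFam W ↔ f W = true)} \ (⋂ A ∈ t2, A)ᶜ).Infinite :=
        Set.Infinite.diff hbig hcompl
      obtain ⟨m, hm⟩ := this.nonempty
      exact ⟨m, hm.1, by simpa using hm.2⟩
    obtain ⟨m, hm⟩ := hinf
    exact absurd (htint (hsub hm)) (Set.notMem_empty m)

/-- The ultrafilters attached to boolean patterns. -/
noncomputable def uIF (f : Set ℕ → Bool) : UF :=
  haveI := genSet_neBot f
  (Ultrafilter.exists_le (Filter.generate (genSet f))).choose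

lemma uIF_le (f : Set ℕ → Bool) : (uIF f : Filter ℕ) ≤ Filter.generate (genSet f) :=
  haveI := genSet_neBot f
  (Ultrafilter.exists_le (Filter.generate (genSet f))).choose_spec

lemma uIF_mem_IFam {f : Set ℕ → Bool} {W : Set ℕ} (h : f W = true) : IFam W ∈ uIF f := by
  apply uIF_le
  apply Filter.mem_generate_of_mem
  exact Set.mem_union_left _ ⟨W, Or.inl ⟨h, rfl⟩⟩

lemma uIF_mem_IFam_compl {f : Set ℕ → Bool} {W : Set ℕ} (h : f W = false) :
    (IFam W)ᶜ ∈ uIF f := by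
  apply uIF_le
  apply Filter.mem_generate_of_mem
  exact Set.mem_union_left _ ⟨W, Or.inr ⟨h, rfl⟩⟩

lemma uIF_free (f : Set ℕ → Bool) : Free (uIF f) := by
  intro a
  apply uIF_le
  apply Filter.mem_generate_of_mem
  apply Set.mem_union_right
  simp only [Set.mem_setOf_eq, compl_compl]
  exact Set.finite_singleton a

lemma uIF_inj : Function.Injective uIF := by
  intro f g h
  by_contra hfg
  have : ∃ W, f W ≠ g W := by
    by_contra hc
    push_neg at hc
    exact hfg (funext hc)
  obtain ⟨W, hW⟩ := this
  cases hf : f W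
  · cases hg : g W
    · exact hW (by rw [hf, hg])
    · have h1 := uIF_mem_IFam_compl hf
      have h2 := uIF_mem_IFam hg
      rw [h] at h1
      have h3 := Filter.inter_mem h1 h2
      rw [Set.compl_inter_self] at h3
      exact Ultrafilter.empty_notMem h3
  · cases hg : g W
    · have h1 := uIF_mem_IFam hf
      have h2 := uIF_mem_IFam_compl hg
      rw [h] at h1
      have h3 := Filter.inter_mem h2 h1
      rw [Set.compl_inter_self] at h3
      exact Ultrafilter.empty_notMem h3
    · exact hW (by rw [hf, hg])


def Dn (n : ℕ) : Set ℕ := Set.range (Nat.pair n)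

lemma Dn_disj : ∀ m n : ℕ, m ≠ n → Dn m ∩ Dn n = ∅ := by
  intro m n hmn
  ext a
  simp only [Dn, Set.mem_inter_iff, Set.mem_range, Set.mem_empty_iff_false, iff_false, not_and]
  rintro ⟨k, rfl⟩ ⟨l, hl⟩
  exact hmn ((Nat.pair_eq_pair.1 hl).1).symm

lemma map_inj {m : ℕ → ℕ} (hm : Function.Injective m) :
    Function.Injective (Ultrafilter.map m : UF → UF) := by
  intro u v huv
  apply uf_ext
  intro A hA
  have h1 : m '' A ∈ Ultrafilter.map m u := by
    rw [Ultrafilter.mem_map]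
    rwa [Function.Injective.preimage_image hm]
  rw [huv, Ultrafilter.mem_map, Function.Injective.preimage_image hm] at h1
  exact h1

lemma map_free {m : ℕ → ℕ} (hm : Function.Injective m) {u : UF} (hu : Free u) :
    Free (Ultrafilter.map m u) := by
  intro a
  rw [Ultrafilter.mem_map]
  have : m ⁻¹' ({a}ᶜ) = (m ⁻¹' {a})ᶜ := rfl
  rw [this]
  apply finite_compl_mem hu
  have hsub : (m ⁻¹' {a}).Subsingleton := by
    intro x hx y hy
    exact hm (hx.trans hy.symm)
  exact hsub.finite

-- cardinal arithmetic helpers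
lemma mk_natfun : Cardinal.mk (ℕ → ℕ) = Cardinal.continuum := by
  rw [Cardinal.mk_arrow]
  simp [Cardinal.mk_nat]

lemma mk_natsetfun : Cardinal.mk (ℕ → Set ℕ) = Cardinal.continuum := by
  rw [Cardinal.mk_arrow]
  simp only [Cardinal.mk_set, Cardinal.mk_nat, Cardinal.lift_id]
  rw [← Cardinal.power_mul, Cardinal.aleph0_mul_aleph0, Cardinal.two_power_aleph0]

lemma mk_boolfun : Cardinal.mk (Set ℕ → Bool) = 2 ^ Cardinal.continuum := by
  rw [Cardinal.mk_arrow]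
  simp only [Cardinal.mk_bool, Cardinal.mk_set, Cardinal.mk_nat, Cardinal.lift_id,
    Cardinal.two_power_aleph0]

lemma mk_equivfun_le : Cardinal.mk (ℕ ≃ ℕ) ≤ Cardinal.continuum := by
  rw [← mk_natfun]
  apply Cardinal.mk_le_of_injective (f := fun e : ℕ ≃ ℕ => (e : ℕ → ℕ))
  intro a b hab
  exact Equiv.coe_fn_injective hab

lemma mk_prod_le_cont {X Y : Type} (hX : Cardinal.mk X ≤ Cardinal.continuum)
    (hY : Cardinal.mk Y ≤ Cardinal.continuum) :
    Cardinal.mk (X × Y) ≤ Cardinal.continuum := by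
  rw [Cardinal.mk_prod]
  simp only [Cardinal.lift_id]
  calc Cardinal.mk X * Cardinal.mk Y ≤ Cardinal.continuum * Cardinal.continuum :=
        mul_le_mul' hX hY
    _ = Cardinal.continuum := Cardinal.mul_eq_self Cardinal.aleph0_le_continuum

lemma mk_nat_le_cont : Cardinal.mk ℕ ≤ Cardinal.continuum := by
  rw [Cardinal.mk_nat]; exact Cardinal.aleph0_le_continuum

/-- Main existence step for the recursion. -/
lemma exGood_exists (n : ℕ) (prev : ∀ m, m < n → UF) :
    ∃ q : UF, Free q ∧ Dn n ∈ q ∧ (∀ m (h : m < n), ¬ UIso (prev m h) q) ∧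
      (∀ m (h : m < n), ∀ bl : ℕ → Set ℕ, ∀ j : ℕ, ¬ UIso ((chosenSC (prev m h) bl).2 j) q) := by
  classical
  set g1 : (ℕ × (ℕ ≃ ℕ)) → UF := fun z =>
    if h : z.1 < n then Ultrafilter.map z.2 (prev z.1 h) else pure 0 with hg1
  set g2 : (ℕ × (ℕ → Set ℕ) × ℕ × (ℕ ≃ ℕ)) → UF := fun z =>
    if h : z.1 < n then Ultrafilter.map z.2.2.2 ((chosenSC (prev z.1 h) z.2.1).2 z.2.2.1)
    else pure 0 with hg2
  set Bad : Set UF := Set.range g1 ∪ Set.range g2 with hBad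
  set Good : Set UF := {q | Free q ∧ Dn n ∈ q} with hGood
  have hGoodBig : (2 : Cardinal) ^ Cardinal.continuum ≤ Cardinal.mk ↥Good := by
    rw [← mk_boolfun]
    have hpairinj : Function.Injective (Nat.pair n) := by
      intro a b hab
      exact (Nat.pair_eq_pair.1 hab).2
    have hmem : ∀ f : Set ℕ → Bool, Ultrafilter.map (Nat.pair n) (uIF f) ∈ Good := by
      intro f
      refine ⟨map_free hpairinj (uIF_free f), ?_⟩
      rw [Ultrafilter.mem_map]
      have : (Nat.pair n) ⁻¹' (Dn n) = Set.univ := by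
        ext k; simp [Dn]
      rw [this]
      exact Filter.univ_mem
    apply Cardinal.mk_le_of_injective
      (f := fun f : Set ℕ → Bool => (⟨Ultrafilter.map (Nat.pair n) (uIF f), hmem f⟩ : ↥Good))
    intro a b hab
    have := congrArg Subtype.val hab
    exact uIF_inj (map_inj hpairinj this)
  have hBadSmall : Cardinal.mk ↥Bad ≤ Cardinal.continuum := by
    have h1 : Cardinal.mk ↥(Set.range g1) ≤ Cardinal.continuum := by
      apply le_trans (Cardinal.mk_range_le)
      exact mk_prod_le_cont mk_nat_le_cont mk_equivfun_le
    have h2 : Cardinal.mk ↥(Set.range g2) ≤ Cardinal.continuum := by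
      apply le_trans (Cardinal.mk_range_le)
      apply mk_prod_le_cont mk_nat_le_cont
      apply mk_prod_le_cont (le_of_eq mk_natsetfun)
      exact mk_prod_le_cont mk_nat_le_cont mk_equivfun_le
    calc Cardinal.mk ↥Bad ≤ Cardinal.mk ↥(Set.range g1) + Cardinal.mk ↥(Set.range g2) :=
          Cardinal.mk_union_le _ _
      _ ≤ Cardinal.continuum + Cardinal.continuum := add_le_add h1 h2
      _ = Cardinal.continuum := Cardinal.add_eq_self Cardinal.aleph0_le_continuum
  have hnotsub : ¬ (Good ⊆ Bad) := by
    intro hsub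
    have := le_trans hGoodBig (le_trans (Cardinal.mk_le_mk_of_subset hsub) hBadSmall)
    exact absurd (Cardinal.cantor Cardinal.continuum) (not_lt.2 this)
  rw [Set.not_subset] at hnotsub
  obtain ⟨q, hqG, hqB⟩ := hnotsub
  refine ⟨q, hqG.1, hqG.2, ?_, ?_⟩
  · intro m h hiso
    obtain ⟨f, hf⟩ := hiso
    apply hqB
    apply Set.mem_union_left
    refine ⟨(m, f), ?_⟩
    rw [hg1]
    simp only [dif_pos h]
    exact hf
  · intro m h bl j hiso
    obtain ⟨f, hf⟩ := hiso
    apply hqB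
    apply Set.mem_union_right
    refine ⟨(m, bl, j, f), ?_⟩
    rw [hg2]
    simp only [dif_pos h]
    exact hf

/-- The recursively chosen sequence of ultrafilters. -/
noncomputable def pseq : ℕ → UF :=
  (Nat.lt_wfRel.wf).fix (fun n ih => (exGood_exists n ih).choose)

lemma pseq_spec (n : ℕ) :
    Free (pseq n) ∧ Dn n ∈ pseq n ∧ (∀ m (h : m < n), ¬ UIso (pseq m) (pseq n)) ∧
      (∀ m (h : m < n), ∀ bl : ℕ → Set ℕ, ∀ j : ℕ,
        ¬ UIso ((chosenSC (pseq m) bl).2 j) (pseq n)) := by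
  have h : pseq n = (exGood_exists n (fun m _ => pseq m)).choose := by
    unfold pseq
    rw [WellFounded.fix_eq]
  rw [h]
  exact (exGood_exists n (fun m _ => pseq m)).choose_spec


lemma pFree (n : ℕ) : Free (pseq n) := (pseq_spec n).1
lemma pD (n : ℕ) : Dn n ∈ pseq n := (pseq_spec n).2.1
lemma pNI : ∀ m n : ℕ, m ≠ n → ¬ UIso (pseq m) (pseq n) := by
  intro m n hmn h
  rcases Nat.lt_or_ge m n with hlt | hge
  · exact (pseq_spec n).2.2.1 m hlt h
  · have hlt : n < m := lt_of_le_of_ne hge (Ne.symm hmn)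
    exact (pseq_spec m).2.2.1 n hlt (uiso_symm h)
lemma pCT : ∀ k n : ℕ, k < n → ∀ bl : ℕ → Set ℕ, ∀ j : ℕ,
    ¬ UIso ((chosenSC (pseq k) bl).2 j) (pseq n) :=
  fun k n h => (pseq_spec n).2.2.2 k h

/-- The core avoidance lemma. -/
lemma core (k : ℕ) (x : ℕ → ℕ) (Z : Set ℕ) (hZ : Z ∈ pseq k) (hinj : Set.InjOn x Z)
    (hdis : (x '' Z) ∩ Z = ∅) :
    ∃ Y, Y ∈ pseq k ∧ Y ⊆ Z ∧ ∀ n, x '' Y ∉ pseq n := by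
  classical
  by_contra hcon
  push_neg at hcon
  -- hcon : ∀ Y, Y ∈ pseq k → Y ⊆ Z → ∃ n, x '' Y ∈ pseq n
  set v : UF := Ultrafilter.map x (pseq k) with hv
  have claim1' : ∀ A ∈ v, ∃ n, A ∈ pseq n := by
    intro A hA
    rw [hv, Ultrafilter.mem_map] at hA
    obtain ⟨n, hn⟩ := hcon (x ⁻¹' A ∩ Z) (Filter.inter_mem hA hZ) inter_subset_right
    refine ⟨n, Filter.mem_of_superset hn ?_⟩
    rintro _ ⟨w, hw, rfl⟩
    exact Set.mem_preimage.1 hw.1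
  have claim0 : x '' Z ∈ v := by
    rw [hv, Ultrafilter.mem_map]
    exact Filter.mem_of_superset hZ (Set.subset_preimage_image x Z)
  have claimNe : ∀ n, v ≠ pseq n := by
    intro n hvn
    by_cases hnk : n = k
    · subst hnk
      have h1 : x '' Z ∈ pseq n := hvn ▸ claim0
      have h2 := Filter.inter_mem h1 hZ
      rw [hdis] at h2
      exact Ultrafilter.empty_notMem h2
    · have hiso : UIso (pseq k) (pseq n) := uiso_of_map (pFree k) hZ hinj (hvn ▸ rfl)
      exact pNI k n (fun h => hnk h.symm) hiso
  -- the index ultrafilter r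
  set gen : Set (Set ℕ) := {N | ∃ A, A ∈ v ∧ N = {n | A ∈ pseq n}} with hgen
  have hne : (Filter.generate gen).NeBot := by
    rw [Filter.neBot_iff]
    intro hbot
    have hempty : (∅ : Set ℕ) ∈ Filter.generate gen := by rw [hbot]; exact Filter.mem_bot
    rw [Filter.mem_generate_iff] at hempty
    obtain ⟨t, htsub, htfin, htint⟩ := hempty
    have hch : ∀ N ∈ t, ∃ A, A ∈ v ∧ N = {n | A ∈ pseq n} := fun N hN => htsub hN
    set WA : Set ℕ → Set ℕ := fun N => if h : N ∈ t then (hch N h).choose else Set.univ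
      with hWA
    have hWAspec : ∀ N (h : N ∈ t), WA N ∈ v ∧ N = {n | WA N ∈ pseq n} := by
      intro N h
      have : WA N = (hch N h).choose := by rw [hWA]; exact dif_pos h
      rw [this]
      exact (hch N h).choose_spec
    set AA : Set ℕ := ⋂ N ∈ t, WA N with hAA
    have hAAv : AA ∈ v := by
      rw [hAA]
      exact (Filter.biInter_mem htfin).2 (fun N hN => (hWAspec N hN).1)
    obtain ⟨n, hn⟩ := claim1' AA hAAv
    have : n ∈ ⋂₀ t := by
      intro N hN
      rw [(hWAspec N hN).2]
      have hsub : AA ⊆ WA N := by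
        rw [hAA]
        exact Set.biInter_subset_of_mem hN
      exact Filter.mem_of_superset hn hsub
    exact absurd (htint this) (Set.notMem_empty n)
  obtain ⟨r, hr⟩ := @Ultrafilter.exists_le _ (Filter.generate gen) hne
  have hrmem : ∀ A ∈ v, {n | A ∈ pseq n} ∈ r := by
    intro A hA
    exact hr (Filter.mem_generate_of_mem ⟨A, hA, rfl⟩)
  have rIff : ∀ A : Set ℕ, A ∈ v ↔ {n | A ∈ pseq n} ∈ r := by
    intro A
    constructor
    · exact hrmem A
    · intro h
      by_contra hc
      have h1 : Aᶜ ∈ v := (Ultrafilter.compl_mem_iff_notMem).2 hc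
      have h2 := hrmem _ h1
      have h3 : {n | Aᶜ ∈ pseq n} = {n | A ∈ pseq n}ᶜ := by
        ext n; simp [Ultrafilter.compl_mem_iff_notMem]
      rw [h3] at h2
      have h4 := Filter.inter_mem h h2
      rw [Set.inter_compl_self] at h4
      exact Ultrafilter.empty_notMem h4
  have rFree : Free r := by
    intro n₀
    by_contra hc
    have h0 : ({n₀} : Set ℕ) ∈ r := by
      rcases Ultrafilter.mem_or_compl_mem r {n₀} with h | h
      · exact h
      · exact absurd h hc
    have hsub : ∀ A ∈ v, A ∈ pseq n₀ := by
      intro A hA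
      have h1 := Filter.inter_mem (hrmem A hA) h0
      obtain ⟨m, hm⟩ := Ultrafilter.nonempty_of_mem h1
      have hm1 : A ∈ pseq m := hm.1
      have hm2 : m = n₀ := hm.2
      rwa [hm2] at hm1
    exact claimNe n₀ (uf_ext hsub)
  set M₀ : Set ℕ := {n | x '' Z ∈ pseq n} with hM₀
  have hM₀r : M₀ ∈ r := hrmem _ claim0
  -- the explicit system
  set c' : ℕ → UF := fun n =>
    if h : x '' Z ∈ pseq n then pullb x Z (pseq n) hinj h else pseq 0 with hc'
  have mem_c' : ∀ {n}, x '' Z ∈ pseq n → ∀ A : Set ℕ, (A ∈ c' n ↔ x '' (A ∩ Z) ∈ pseq n) := by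
    intro n hn A
    rw [hc']
    simp only [dif_pos hn]
    exact mem_pullb hinj hn A
  set bl : ℕ → Set ℕ := fun n => Z ∩ x ⁻¹' (Dn n) with hbl
  have hbl_disj : PDisj bl := by
    intro m n hmn
    apply Set.eq_empty_iff_forall_notMem.2
    intro a ha
    have h1 : x a ∈ Dn m := ha.1.2
    have h2 : x a ∈ Dn n := ha.2.2
    have h3 := Dn_disj m n hmn
    have h4 : x a ∈ Dn m ∩ Dn n := ⟨h1, h2⟩
    rw [h3] at h4
    exact h4
  have himg : ∀ A : Set ℕ, A ∩ Z ∈ pseq k ↔ x '' (A ∩ Z) ∈ v := by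
    intro A
    constructor
    · intro h
      rw [hv, Ultrafilter.mem_map]
      exact Filter.mem_of_superset h (Set.subset_preimage_image x (A ∩ Z))
    · intro h
      rw [hv, Ultrafilter.mem_map] at h
      have hss : (x ⁻¹' (x '' (A ∩ Z))) ∩ Z ⊆ A ∩ Z := by
        rintro z ⟨hz1, hz2⟩
        obtain ⟨a, ha, hxa⟩ := Set.mem_preimage.1 hz1
        have : a = z := hinj ha.2 hz2 hxa
        exact this ▸ ha
      have := Filter.inter_mem h hZ
      exact Filter.mem_of_superset this hss
  have hsys : IsSystem (pseq k) bl r c' := by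
    refine ⟨rFree, ?_, ?_⟩
    · apply Filter.mem_of_superset hM₀r
      intro n hn
      simp only [Set.mem_setOf_eq]
      rw [mem_c' hn]
      have h1 : bl n ∩ Z = Z ∩ x ⁻¹' (Dn n) := by
        rw [hbl]
        ext a; simp only [Set.mem_inter_iff, Set.mem_preimage]; tauto
      rw [h1, Set.image_inter_preimage]
      exact Filter.inter_mem hn (pD n)
    · intro A
      rw [mem_iff_inter_mem hZ A, himg A, rIff]
      apply mem_congr_on hM₀r
      ext n
      simp only [Set.mem_inter_iff, Set.mem_setOf_eq]
      constructor
      · rintro ⟨h1, h2⟩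
        exact ⟨(mem_c' h2 A).2 h1, h2⟩
      · rintro ⟨h1, h2⟩
        exact ⟨(mem_c' h2 A).1 h1, h2⟩
  have hEx : ∃ sc : UF × (ℕ → UF), IsSystem (pseq k) bl sc.1 sc.2 := ⟨(r, c'), hsys⟩
  have hchos := chosenSC_spec hEx
  obtain ⟨hseq, hagr⟩ := system_unique hbl_disj hchos hsys
  rw [hseq] at hagr
  -- pick an index n* > k in the agreement set
  have hgtmem : {n | k < n} ∈ r := by
    have h1 : {n : ℕ | k < n} = (Set.Iic k)ᶜ := by
      ext n; simp only [Set.mem_setOf_eq, Set.mem_compl_iff, Set.mem_Iic]; omega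
    rw [h1]
    exact finite_compl_mem rFree (Set.finite_Iic k)
  have hE : ({n | (chosenSC (pseq k) bl).2 n = c' n} ∩ M₀ ∩ {n | k < n}) ∈ r :=
    Filter.inter_mem (Filter.inter_mem hagr hM₀r) hgtmem
  obtain ⟨ns, hns⟩ := Ultrafilter.nonempty_of_mem hE
  obtain ⟨⟨hnsAgr, hnsM⟩, hnsGt⟩ := hns
  -- c' ns is isomorphic to pseq ns
  have hfree_c : Free (c' ns) := by
    intro a
    have h1 : ({a} : Set ℕ) ∉ c' ns := by
      rw [mem_c' hnsM]
      apply not_mem_of_finite (pFree ns)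
      apply Set.Finite.subset (Set.finite_singleton (x a))
      rintro _ ⟨w, hw, rfl⟩
      simp only [Set.mem_singleton_iff]
      rw [Set.mem_inter_iff, Set.mem_singleton_iff] at hw
      rw [hw.1]
    exact (Ultrafilter.compl_mem_iff_notMem).2 h1
  have hZc : Z ∈ c' ns := by
    rw [mem_c' hnsM, Set.inter_self]
    exact hnsM
  have hmapc : Ultrafilter.map x (c' ns) = pseq ns := by
    apply uf_ext
    intro A hA
    rw [Ultrafilter.mem_map] at hA
    rw [mem_c' hnsM] at hA
    have h1 : x '' (x ⁻¹' A ∩ Z) = x '' Z ∩ A := by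
      rw [Set.inter_comm, Set.image_inter_preimage]
    rw [h1] at hA
    exact Filter.mem_of_superset hA inter_subset_right
  have hiso : UIso (c' ns) (pseq ns) := uiso_of_map hfree_c hZc hinj hmapc
  rw [← hnsAgr] at hiso
  exact pCT k ns hnsGt bl ns hiso


/-- The bornology. -/
def BB : Set (Set ℕ) := {b | ∀ n, b ∉ pseq n}

lemma BB_mem_iff {b : Set ℕ} : b ∈ BB ↔ ∀ n, b ∉ pseq n := Iff.rfl

lemma BB_not_mem_iff {b : Set ℕ} : b ∉ BB ↔ ∃ n, b ∈ pseq n := by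
  rw [BB_mem_iff]
  push_neg
  rfl

lemma BB_born : IsBornology BB := by
  constructor
  · apply Set.eq_univ_of_forall
    intro z
    refine ⟨{z}, ?_, rfl⟩
    intro n
    exact not_mem_of_finite (pFree n) (Set.finite_singleton z)
  · intro h
    exact h 0 Filter.univ_mem
  · intro b hb a hab n ha
    exact hb n (Filter.mem_of_superset ha hab)
  · intro b hb c hc n hbc
    rcases (Ultrafilter.union_mem_iff).1 hbc with h | h
    · exact hb n h
    · exact hc n h

lemma down_sub_up : downB BB ⊆ upB BB := by
  rintro e ⟨hd, b, hb, hsub⟩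
  refine ⟨hd, ?_⟩
  intro a ha
  have hu : a ∪ b ∈ BB := BB_born.union_mem a ha b hb
  constructor
  · apply BB_born.subset_mem _ hu
    rintro y ⟨z, hz, hzy⟩
    rcases hsub hzy with h | h
    · exact Or.inr h.2
    · have : z = y := h
      exact Or.inl (this ▸ hz)
  · apply BB_born.subset_mem _ hu
    rintro y ⟨z, hz, hzy⟩
    have hzy' : (y, z) ∈ e := hzy
    rcases hsub hzy' with h | h
    · exact Or.inr h.1
    · have : y = z := h
      exact Or.inl (this ▸ hz)

lemma ball_union (e f : Set (ℕ × ℕ)) (a : Set ℕ) :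
    ballS (e ∪ f) a = ballS e a ∪ ballS f a := by
  ext y
  simp only [ballS, Set.mem_setOf_eq, Set.mem_union]
  constructor
  · rintro ⟨z, hz, h | h⟩
    · exact Or.inl ⟨z, hz, h⟩
    · exact Or.inr ⟨z, hz, h⟩
  · rintro (⟨z, hz, h⟩ | ⟨z, hz, h⟩)
    · exact ⟨z, hz, Or.inl h⟩
    · exact ⟨z, hz, Or.inr h⟩

lemma up_sub_down : upB BB ⊆ downB BB := by
  rintro e ⟨hdiag, hballs⟩
  set e' : Set (ℕ × ℕ) := e ∪ invS e with he'
  have he'sub : e ⊆ e' := Set.subset_union_left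
  have he'symm : ∀ a b : ℕ, (a, b) ∈ e' → (b, a) ∈ e' := by
    intro a b hab
    rcases hab with h | h
    · exact Or.inr h
    · exact Or.inl h
  have hball' : ∀ a ∈ BB, ballS e' a ∈ BB := by
    intro a ha
    rw [he', ball_union]
    have h1 := hballs a ha
    have h2 : ballS (invS e) a ∈ BB := h1.2
    exact BB_born.union_mem _ h1.1 _ h2
  set S : Set ℕ := {z | ∃ w, w ≠ z ∧ (z, w) ∈ e'} with hS
  by_cases hSB : S ∈ BB
  · refine ⟨hdiag, S, hSB, ?_⟩
    rintro ⟨a, b⟩ hab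
    by_cases haeq : a = b
    · exact Or.inr haeq
    · left
      constructor
      · exact ⟨b, fun h => haeq h.symm, he'sub hab⟩
      · refine ⟨a, fun h => haeq h, ?_⟩
        exact Or.inr hab
  · exfalso
    -- the partner function
    have hgex : ∀ z ∈ S, ∃ w, w ≠ z ∧ (z, w) ∈ e' := fun z hz => hz
    set g : ℕ → ℕ := fun z => if h : z ∈ S then (hgex z h).choose else z with hgdef
    have hg : ∀ z ∈ S, g z ≠ z ∧ (z, g z) ∈ e' := by
      intro z hz
      have : g z = (hgex z hz).choose := by rw [hgdef]; exact dif_pos hz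
      rw [this]
      exact (hgex z hz).choose_spec
    set gS : Set ℕ := g '' S with hgS
    have hgSnot : gS ∉ BB := by
      intro hc
      apply hSB
      have hb := hball' gS hc
      apply BB_born.subset_mem _ hb
      intro z hz
      exact ⟨g z, Set.mem_image_of_mem g hz, he'symm _ _ (hg z hz).2⟩
    obtain ⟨k, hk⟩ := BB_not_mem_iff.1 hgSnot
    -- the selector
    have hxex : ∀ y ∈ gS, ∃ z, z ∈ S ∧ g z = y := by
      rintro y ⟨z, hz, rfl⟩; exact ⟨z, hz, rfl⟩
    set xx : ℕ → ℕ := fun y => if h : y ∈ gS then (hxex y h).choose else y with hxxdef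
    have hxx : ∀ y ∈ gS, xx y ∈ S ∧ g (xx y) = y := by
      intro y hy
      have : xx y = (hxex y hy).choose := by rw [hxxdef]; exact dif_pos hy
      rw [this]
      exact (hxex y hy).choose_spec
    have hxxinj : Set.InjOn xx gS := by
      intro y1 h1 y2 h2 heq
      have e1 := (hxx y1 h1).2
      have e2 := (hxx y2 h2).2
      rw [← e1, ← e2, heq]
    have hxxfpf : ∀ y ∈ gS, xx y ≠ y := by
      intro y hy hc
      have h1 := (hxx y hy).1
      have h2 := (hxx y hy).2
      rw [hc] at h1 h2
      exact (hg y h1).1 h2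
    obtain ⟨Z, hZk, hZsub, hZdis⟩ := exists_disjoint_piece (pseq k) hk hxxinj hxxfpf
    obtain ⟨Y, hYk, hYZ, hYav⟩ := core k xx Z hZk (hxxinj.mono hZsub) hZdis
    set b : Set ℕ := xx '' Y with hbdef
    have hbBB : b ∈ BB := fun n => hYav n
    have hbS : b ⊆ S := by
      rintro _ ⟨y, hy, rfl⟩
      exact (hxx y (hZsub (hYZ hy))).1
    have hYball : Y ⊆ ballS e' b := by
      intro y hy
      have hygS : y ∈ gS := hZsub (hYZ hy)
      refine ⟨xx y, Set.mem_image_of_mem xx hy, ?_⟩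
      have h1 := (hg (xx y) (hxx y hygS).1).2
      rw [(hxx y hygS).2] at h1
      exact h1
    have hballBB := hball' b hbBB
    have : ballS e' b ∈ pseq k := Filter.mem_of_superset hYk hYball
    exact hballBB k this

lemma sharp_ge : (2 : Cardinal) ^ Cardinal.continuum ≤ Cardinal.mk ↥(sharp BB) := by
  rw [← mk_boolfun]
  have hmem : ∀ f : Set ℕ → Bool, sumU (uIF f) pseq ∈ sharp BB := by
    intro f b hb
    rw [mem_sumU]
    have : {n | (bᶜ : Set ℕ) ∈ pseq n} = Set.univ := by
      apply Set.eq_univ_of_forall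
      intro n
      exact (Ultrafilter.compl_mem_iff_notMem).2 (hb n)
    rw [this]
    exact Filter.univ_mem
  apply Cardinal.mk_le_of_injective
    (f := fun f : Set ℕ → Bool => (⟨sumU (uIF f) pseq, hmem f⟩ : ↥(sharp BB)))
  intro f1 f2 h12
  have h := congrArg Subtype.val h12
  simp only at h
  apply uIF_inj
  -- sumU is injective in q
  apply uf_ext
  intro N hN
  by_contra hc
  have hNc : Nᶜ ∈ uIF f2 := (Ultrafilter.compl_mem_iff_notMem).2 hc
  set A : Set ℕ := ⋃ n ∈ N, Dn n with hA
  have hAN : {n | A ∈ pseq n} = N := by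
    ext n
    simp only [Set.mem_setOf_eq]
    constructor
    · intro hn
      by_contra hnN
      have hdisj : A ∩ Dn n = ∅ := by
        apply Set.eq_empty_iff_forall_notMem.2
        rintro a ⟨ha1, ha2⟩
        obtain ⟨m, hm⟩ := Set.mem_iUnion.1 ha1
        obtain ⟨hmN, ha3⟩ := Set.mem_iUnion.1 hm
        have hmn : m ≠ n := fun h => hnN (h ▸ hmN)
        have := Dn_disj m n hmn
        have h4 : a ∈ Dn m ∩ Dn n := ⟨ha3, ha2⟩
        rw [this] at h4
        exact h4
      have := Filter.inter_mem hn (pD n)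
      rw [hdisj] at this
      exact Ultrafilter.empty_notMem this
    · intro hn
      apply Filter.mem_of_superset (pD n)
      rw [hA]
      exact Set.subset_biUnion_of_mem hn
  have h1 : A ∈ sumU (uIF f1) pseq := by
    rw [mem_sumU, hAN]; exact hN
  rw [h] at h1
  rw [mem_sumU, hAN] at h1
  have := Filter.inter_mem h1 hNc
  rw [Set.inter_compl_self] at this
  exact Ultrafilter.empty_notMem this

lemma sharp_le : Cardinal.mk ↥(sharp BB) ≤ 2 ^ Cardinal.continuum := by
  have h1 : Cardinal.mk ↥(sharp BB) ≤ Cardinal.mk UF := Cardinal.mk_subtype_le _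
  have h2 : Cardinal.mk UF ≤ Cardinal.mk (Set (Set ℕ)) := by
    apply Cardinal.mk_le_of_injective (f := fun u : UF => {A : Set ℕ | A ∈ u})
    intro u v huv
    simp only at huv
    apply uf_ext
    intro A hA
    have h5 : A ∈ {A : Set ℕ | A ∈ u} := hA
    rw [huv] at h5
    exact h5
  have h3 : Cardinal.mk (Set (Set ℕ)) = 2 ^ Cardinal.continuum := by
    rw [Cardinal.mk_set, Cardinal.mk_set, Cardinal.mk_nat, Cardinal.two_power_aleph0]
  exact le_trans h1 (le_trans h2 (le_of_eq h3))


end MM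

theorem stmt12 :
    ∃ B : Set (Set ℕ), IsBornology B ∧ downB B = upB B ∧
      Cardinal.mk (sharp B) = 2 ^ Cardinal.continuum := by
  refine ⟨MM.BB, MM.BB_born, Set.Subset.antisymm MM.down_sub_up MM.up_sub_down, ?_⟩
  exact le_antisymm MM.sharp_le MM.sharp_ge
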